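/- Under the billiard polygon setup with h the support function of an ellipse with a₁ ≠ a₂ and under the Joachimsthal hypothesis, one has Σ_{i=1}^{n} cos 2ψᵢ = (L/J − n·(a₁² + a₂²))/(a₁² − a₂²). -/

import Mathlib

open Real

private lemma aux_inner_pos (a₁ a₂ : ℝ) (ha₁ : 0 < a₁) (ha₂ : 0 < a₂) (x : ℝ) :
    0 < a₁ ^ 2 * Real.cos x ^ 2 + a₂ ^ 2 * Real.sin x ^ 2 := by
  rcases le_total (a₁ ^ 2) (a₂ ^ 2) with hle | hle
  · nlinarith [Real.sin_sq_add_cos_sq x, sq_nonneg (Real.sin x), sq_nonneg (Real.cos x),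
      pow_pos ha₁ 2]
  · nlinarith [Real.sin_sq_add_cos_sq x, sq_nonneg (Real.sin x), sq_nonneg (Real.cos x),
      pow_pos ha₂ 2]

private lemma aux_deriv (a₁ a₂ : ℝ) (ha₁ : 0 < a₁) (ha₂ : 0 < a₂) (h : ℝ → ℝ)
    (hh : ∀ x : ℝ, h x = Real.sqrt (a₁ ^ 2 * Real.cos x ^ 2 + a₂ ^ 2 * Real.sin x ^ 2))
    (x : ℝ) :
    deriv h x = (a₂ ^ 2 - a₁ ^ 2) * Real.sin x * Real.cos x / h x := by
  have hpos := aux_inner_pos a₁ a₂ ha₁ ha₂ x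
  have hg : HasDerivAt (fun y => a₁ ^ 2 * Real.cos y ^ 2 + a₂ ^ 2 * Real.sin y ^ 2)
      (2 * ((a₂ ^ 2 - a₁ ^ 2) * Real.sin x * Real.cos x)) x := by
    have h1 := ((Real.hasDerivAt_cos x).pow 2).const_mul (a₁ ^ 2)
    have h2 := ((Real.hasDerivAt_sin x).pow 2).const_mul (a₂ ^ 2)
    have := h1.add h2
    exact this.congr_deriv (by norm_num; ring)
  have hs := hg.sqrt (ne_of_gt hpos)
  have hEq : h = fun y => Real.sqrt (a₁ ^ 2 * Real.cos y ^ 2 + a₂ ^ 2 * Real.sin y ^ 2) :=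
    funext hh
  rw [hEq, hs.deriv]
  have hsq : Real.sqrt (a₁ ^ 2 * Real.cos x ^ 2 + a₂ ^ 2 * Real.sin x ^ 2) ≠ 0 :=
    ne_of_gt (Real.sqrt_pos.2 hpos)
  field_simp

/-- Corollary: `∑ cos 2ψᵢ = (L/J - n(a₁²+a₂²))/(a₁²-a₂²)`. -/
theorem stmt_7
    (a₁ a₂ : ℝ) (ha₁ : 0 < a₁) (ha₂ : 0 < a₂)
    (h : ℝ → ℝ)
    (hh : ∀ x : ℝ, h x = Real.sqrt (a₁ ^ 2 * Real.cos x ^ 2 + a₂ ^ 2 * Real.sin x ^ 2))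
    (n : ℕ) (hn : 2 ≤ n)
    (φ ψ δ : ℕ → ℝ)
    (hφ : φ n = φ 0 + 2 * Real.pi)
    (hψ : ∀ i ∈ Finset.Icc 1 n, ψ i = (φ (i - 1) + φ i) / 2)
    (hδ : ∀ i ∈ Finset.Icc 1 n, δ i = (φ i - φ (i - 1)) / 2)
    (M : ℕ → EuclideanSpace ℝ (Fin 2))
    (hM : ∀ i ∈ Finset.Icc 1 n, M i
        = h (ψ i) • (WithLp.toLp 2 ![Real.cos (ψ i), Real.sin (ψ i)] : EuclideanSpace ℝ (Fin 2))
        + deriv h (ψ i) • (WithLp.toLp 2 ![-Real.sin (ψ i), Real.cos (ψ i)] : EuclideanSpace ℝ (Fin 2)))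
    (hMwrap : M (n + 1) = M 1)
    (chord : ∀ i ∈ Finset.Icc 1 n, ∃ t : ℝ, 0 < t ∧
        M (i + 1) - M i = t • (WithLp.toLp 2 ![-Real.sin (φ i), Real.cos (φ i)] : EuclideanSpace ℝ (Fin 2)))
    (J : ℝ) (hJ : 0 < J)
    (hJoach : ∀ i ∈ Finset.Icc 1 n, Real.sin (δ i) = J * h (ψ i))
    (ha : a₁ ≠ a₂)
    (L : ℝ) (hL : L = ∑ i ∈ Finset.Icc 1 n, ‖M (i + 1) - M i‖)
    : ∑ i ∈ Finset.Icc 1 n, Real.cos (2 * ψ i)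
      = (L / J - n * (a₁ ^ 2 + a₂ ^ 2)) / (a₁ ^ 2 - a₂ ^ 2) := by
  have hpos : ∀ x : ℝ, 0 < h x := fun x => by
    rw [hh]; exact Real.sqrt_pos.2 (aux_inner_pos a₁ a₂ ha₁ ha₂ x)
  have hsq : ∀ x : ℝ, h x ^ 2 = a₁ ^ 2 * Real.cos x ^ 2 + a₂ ^ 2 * Real.sin x ^ 2 := fun x => by
    rw [hh]; exact Real.sq_sqrt (le_of_lt (aux_inner_pos a₁ a₂ ha₁ ha₂ x))
  have hd : ∀ x : ℝ, deriv h x = (a₂ ^ 2 - a₁ ^ 2) * Real.sin x * Real.cos x / h x :=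
    aux_deriv a₁ a₂ ha₁ ha₂ h hh
  -- coordinates of M i
  have hM0 : ∀ i ∈ Finset.Icc 1 n, (M i) 0 = a₁ ^ 2 * Real.cos (ψ i) / h (ψ i) := by
    intro i hi
    rw [hM i hi]
    have hp := hpos (ψ i)
    have hq := hsq (ψ i)
    simp only [PiLp.add_apply, PiLp.smul_apply, Matrix.cons_val_zero, smul_eq_mul, hd]
    field_simp
    linear_combination Real.cos (ψ i) * hq + a₁ ^ 2 * Real.cos (ψ i) * Real.sin_sq_add_cos_sq (ψ i)
  have hM1 : ∀ i ∈ Finset.Icc 1 n, (M i) 1 = a₂ ^ 2 * Real.sin (ψ i) / h (ψ i) := by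
    intro i hi
    rw [hM i hi]
    have hp := hpos (ψ i)
    have hq := hsq (ψ i)
    simp only [PiLp.add_apply, PiLp.smul_apply, Matrix.cons_val_one, Matrix.head_cons,
      Matrix.cons_val_zero, smul_eq_mul, hd]
    field_simp
    linear_combination Real.sin (ψ i) * hq + a₂ ^ 2 * Real.sin (ψ i) * Real.sin_sq_add_cos_sq (ψ i)
  -- chord length via components
  have hnorm : ∀ i ∈ Finset.Icc 1 n, ‖M (i + 1) - M i‖
      = -Real.sin (φ i) * ((M (i + 1)) 0 - (M i) 0)
        + Real.cos (φ i) * ((M (i + 1)) 1 - (M i) 1) := by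
    intro i hi
    obtain ⟨t, ht, hc⟩ := chord i hi
    have h0 : (M (i + 1) - M i) 0 = t * (-Real.sin (φ i)) := by
      rw [hc]; simp
    have h1 : (M (i + 1) - M i) 1 = t * Real.cos (φ i) := by
      rw [hc]; simp
    have h0' : (M (i + 1)) 0 - (M i) 0 = t * (-Real.sin (φ i)) := by
      simpa [PiLp.sub_apply] using h0
    have h1' : (M (i + 1)) 1 - (M i) 1 = t * Real.cos (φ i) := by
      simpa [PiLp.sub_apply] using h1
    calc ‖M (i + 1) - M i‖
        = Real.sqrt ((t * (-Real.sin (φ i))) ^ 2 + (t * Real.cos (φ i)) ^ 2) := by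
          rw [EuclideanSpace.norm_eq, Fin.sum_univ_two, Real.norm_eq_abs, Real.norm_eq_abs,
            sq_abs, sq_abs, h0, h1]
      _ = t := by
          rw [show (t * (-Real.sin (φ i))) ^ 2 + (t * Real.cos (φ i)) ^ 2 = t ^ 2 by
            linear_combination t ^ 2 * Real.sin_sq_add_cos_sq (φ i)]
          exact Real.sqrt_sq ht.le
      _ = -Real.sin (φ i) * ((M (i + 1)) 0 - (M i) 0)
            + Real.cos (φ i) * ((M (i + 1)) 1 - (M i) 1) := by
          rw [h0', h1']
          linear_combination (-t) * Real.sin_sq_add_cos_sq (φ i)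
  -- per-index chord length formula
  set G : ℕ → ℝ := fun i =>
    (a₂ ^ 2 - a₁ ^ 2) * Real.cos (δ i) * Real.sin (ψ i) * Real.cos (ψ i) / h (ψ i) with hG
  set N : ℕ → ℕ := fun i => if i = n then 1 else i + 1 with hN
  -- core trig identity
  have core : ∀ p d : ℝ,
      -Real.sin (p + d) * (a₁ ^ 2 * Real.cos p / h p)
        + Real.cos (p + d) * (a₂ ^ 2 * Real.sin p / h p)
      = (a₂ ^ 2 - a₁ ^ 2) * Real.cos d * Real.sin p * Real.cos p / h p
        - Real.sin d * h p := by
    intro p d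
    have hp := hpos p
    have hq := hsq p
    rw [Real.sin_add, Real.cos_add]
    field_simp
    linear_combination Real.sin d * hq
  have key : ∀ i ∈ Finset.Icc 1 n, ‖M (i + 1) - M i‖
      = (J * h (ψ i) ^ 2 - G i) + (J * h (ψ (N i)) ^ 2 + G (N i)) := by
    intro i hi
    simp only [Finset.mem_Icc] at hi
    have hi' : i ∈ Finset.Icc 1 n := Finset.mem_Icc.2 hi
    -- relations
    have hψi := hψ i hi'
    have hδi := hδ i hi'
    have hlow : φ i = ψ i + δ i := by
      rw [hψi, hδi]; ring
    have hNi : N i ∈ Finset.Icc 1 n := by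
      simp only [hN, Finset.mem_Icc]
      split <;> omega
    have hMnext : M (i + 1) = M (N i) := by
      by_cases hcase : i = n
      · rw [hcase, hMwrap]; simp [hN, hcase]
      · simp [hN, hcase]
    have hup : ∃ k : ℝ, Real.sin k = 0 ∧ Real.cos k = 1 ∧
        φ i = ψ (N i) + (- δ (N i)) + k := by
      by_cases hcase : i = n
      · refine ⟨2 * Real.pi, Real.sin_two_pi, Real.cos_two_pi, ?_⟩
        have h1 : (1 : ℕ) ∈ Finset.Icc 1 n := Finset.mem_Icc.2 ⟨le_refl 1, by omega⟩
        have hNn : N n = 1 := by simp [hN]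
        rw [hcase, hNn, hφ, hψ 1 h1, hδ 1 h1]
        norm_num
        ring
      · have hmem : i + 1 ∈ Finset.Icc 1 n := Finset.mem_Icc.2 ⟨by omega, by omega⟩
        refine ⟨0, Real.sin_zero, Real.cos_zero, ?_⟩
        simp only [hN, if_neg hcase]
        rw [hψ (i + 1) hmem, hδ (i + 1) hmem]
        simp only [Nat.add_sub_cancel]
        ring
    obtain ⟨k, hk0, hk1, hkφ⟩ := hup
    rw [hnorm i hi', hM0 i hi', hM1 i hi', hMnext, hM0 (N i) hNi, hM1 (N i) hNi]
    have e1 : -Real.sin (φ i) * (a₁ ^ 2 * Real.cos (ψ i) / h (ψ i))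
        + Real.cos (φ i) * (a₂ ^ 2 * Real.sin (ψ i) / h (ψ i))
        = G i - J * h (ψ i) ^ 2 := by
      rw [hlow, core (ψ i) (δ i), hG]
      have := hJoach i hi'
      rw [this]; ring
    have e2 : -Real.sin (φ i) * (a₁ ^ 2 * Real.cos (ψ (N i)) / h (ψ (N i)))
        + Real.cos (φ i) * (a₂ ^ 2 * Real.sin (ψ (N i)) / h (ψ (N i)))
        = G (N i) + J * h (ψ (N i)) ^ 2 := by
      have hsin : Real.sin (φ i) = Real.sin (ψ (N i) + (- δ (N i))) := by
        rw [hkφ, Real.sin_add, hk0, hk1]; ring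
      have hcos : Real.cos (φ i) = Real.cos (ψ (N i) + (- δ (N i))) := by
        rw [hkφ, Real.cos_add, hk0, hk1]; ring
      rw [hsin, hcos, core (ψ (N i)) (- δ (N i)), hG]
      have := hJoach (N i) hNi
      rw [Real.sin_neg, Real.cos_neg, this]; ring
    linear_combination e2 - e1
  -- cyclic shift invariance of sums
  have hshift : ∀ f : ℕ → ℝ, ∑ i ∈ Finset.Icc 1 n, f (N i) = ∑ i ∈ Finset.Icc 1 n, f i := by
    intro f
    apply Finset.sum_nbij' (i := N) (j := fun j => if j = 1 then n else j - 1)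
    · intro a hamem
      simp only [Finset.mem_Icc] at hamem ⊢
      simp only [hN]; split <;> omega
    · intro a hamem
      simp only [Finset.mem_Icc] at hamem ⊢
      split <;> omega
    · intro a hamem
      simp only [Finset.mem_Icc] at hamem
      simp only [hN]
      split <;> split <;> omega
    · intro a hamem
      simp only [Finset.mem_Icc] at hamem
      simp only [hN]
      split <;> split <;> omega
    · intro a _
      rfl
  -- sum everything
  have hLsum : L = ∑ i ∈ Finset.Icc 1 n, 2 * J * h (ψ i) ^ 2 := by
    have h2 : ∑ i ∈ Finset.Icc 1 n, (J * h (ψ (N i)) ^ 2 + G (N i))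
        = ∑ i ∈ Finset.Icc 1 n, (J * h (ψ i) ^ 2 + G i) :=
      hshift (fun j => J * h (ψ j) ^ 2 + G j)
    rw [hL, Finset.sum_congr rfl key, Finset.sum_add_distrib, h2, ← Finset.sum_add_distrib]
    apply Finset.sum_congr rfl
    intro i _
    ring
  have hcos2 : ∀ i ∈ Finset.Icc 1 n, 2 * J * h (ψ i) ^ 2
      = J * (a₁ ^ 2 + a₂ ^ 2) + J * (a₁ ^ 2 - a₂ ^ 2) * Real.cos (2 * ψ i) := by
    intro i _
    have hq := hsq (ψ i)
    have hc2 := Real.cos_two_mul (ψ i)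
    have hsc := Real.sin_sq_add_cos_sq (ψ i)
    rw [hc2]
    linear_combination 2 * J * hq + 2 * J * a₂ ^ 2 * hsc
  have hcard : (Finset.Icc 1 n).card = n := by
    rw [Nat.card_Icc]; omega
  have hLsum2 : L = J * (n * (a₁ ^ 2 + a₂ ^ 2))
      + J * (a₁ ^ 2 - a₂ ^ 2) * ∑ i ∈ Finset.Icc 1 n, Real.cos (2 * ψ i) := by
    rw [hLsum, Finset.sum_congr rfl hcos2, Finset.sum_add_distrib, Finset.sum_const, hcard,
      ← Finset.mul_sum]
    ring
  have hane : a₁ ^ 2 - a₂ ^ 2 ≠ 0 := by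
    intro heq
    apply ha
    have h1 : a₁ ^ 2 = a₂ ^ 2 := by linarith
    calc a₁ = Real.sqrt (a₁ ^ 2) := (Real.sqrt_sq ha₁.le).symm
      _ = Real.sqrt (a₂ ^ 2) := by rw [h1]
      _ = a₂ := Real.sqrt_sq ha₂.le
  have hJne : J ≠ 0 := ne_of_gt hJ
  have hstep : L / J - n * (a₁ ^ 2 + a₂ ^ 2)
      = (a₁ ^ 2 - a₂ ^ 2) * ∑ i ∈ Finset.Icc 1 n, Real.cos (2 * ψ i) := by
    rw [hLsum2]
    field_simp
    ring
  rw [hstep, mul_comm, mul_div_assoc, div_self hane, mul_one]
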